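/- Let ℓ ≥ 1 and let G be the 3ℓ×3ℓ block matrix with diagonal blocks B = [[1, −5/13, −5/13],[−5/13, 1, −5/13],[−5/13, −5/13, 1]] and all off-diagonal blocks equal to (1/13)J₃. Then G is positive semidefinite of rank 2ℓ + 1. -/

import Mathlib

open Matrix Finset

private noncomputable def wv : Fin 3 → Fin 2 → ℝ
  | 0, 0 => 1
  | 0, 1 => 0
  | 1, 0 => -(1/2)
  | 1, 1 => Real.sqrt 3 / 2
  | 2, 0 => -(1/2)
  | 2, 1 => -(Real.sqrt 3 / 2)

private lemma sqrt3_sq : Real.sqrt 3 * Real.sqrt 3 = 3 :=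
  Real.mul_self_sqrt (by norm_num)

private lemma wv_sum (t : Fin 2) : ∑ s, wv s t = 0 := by
  fin_cases t <;> rw [Fin.sum_univ_three] <;> simp [wv] <;> ring

private lemma wv_dot (s s' : Fin 3) :
    ∑ t, wv s t * wv s' t = if s = s' then 1 else -(1/2) := by
  fin_cases s <;> fin_cases s' <;> rw [Fin.sum_univ_two] <;>
    simp [wv] <;> nlinarith [sqrt3_sq]

private lemma wv_gram (t t' : Fin 2) :
    ∑ s, wv s t * wv s t' = if t = t' then 3/2 else 0 := by
  fin_cases t <;> fin_cases t' <;> rw [Fin.sum_univ_three] <;>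
    simp [wv] <;> nlinarith [sqrt3_sq]

theorem stmt_18 (l : ℕ) (hl : 1 ≤ l)
    (G : Matrix (Fin l × Fin 3) (Fin l × Fin 3) ℝ)
    (hG : ∀ i j : Fin l × Fin 3, G i j =
      if i.1 = j.1 then (if i.2 = j.2 then 1 else -5/13) else 1/13) :
    G.PosSemidef ∧ G.rank = 2 * l + 1 := by
  set A : Matrix (Fin l × Fin 3) (Option (Fin l × Fin 2)) ℝ :=
    fun i c => Option.elim c (Real.sqrt (1/13))
      (fun p => if i.1 = p.1 then Real.sqrt (12/13) * wv i.2 p.2 else 0) with hA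
  have h13 : Real.sqrt (1/13) * Real.sqrt (1/13) = 1/13 :=
    Real.mul_self_sqrt (by norm_num)
  have h1213 : Real.sqrt (12/13) * Real.sqrt (12/13) = 12/13 :=
    Real.mul_self_sqrt (by norm_num)
  have key : ∀ (a b : Fin l) (x y : Fin 3),
      (∑ k : Fin l, ∑ t : Fin 2,
        (if a = k then Real.sqrt (12/13) * wv x t else 0) *
        (if b = k then Real.sqrt (12/13) * wv y t else 0)) =
      if a = b then (12/13) * (if x = y then 1 else -(1/2)) else 0 := by
    intro a b x y
    by_cases h : a = b
    · subst h
      rw [if_pos rfl]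
      have step : ∀ k : Fin l, (∑ t : Fin 2,
          (if a = k then Real.sqrt (12/13) * wv x t else 0) *
          (if a = k then Real.sqrt (12/13) * wv y t else 0)) =
          if a = k then (12/13) * ∑ t, wv x t * wv y t else 0 := by
        intro k
        by_cases hk : a = k
        · subst hk
          rw [if_pos rfl, Finset.mul_sum]
          refine Finset.sum_congr rfl fun t _ => ?_
          rw [if_pos rfl, if_pos rfl]
          linear_combination (wv x t * wv y t) * h1213
        · simp [hk]
      rw [Finset.sum_congr rfl fun k _ => step k, Finset.sum_ite_eq,
        if_pos (Finset.mem_univ a), wv_dot]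
    · rw [if_neg h]
      refine Finset.sum_eq_zero fun k _ => Finset.sum_eq_zero fun t _ => ?_
      by_cases hk : a = k
      · have : ¬ b = k := fun hb => h (hk.trans hb.symm)
        simp [this]
      · simp [hk]
  -- G = A * Aᵀ
  have hGA : G = A * Aᵀ := by
    ext i j
    rw [hG]
    simp only [mul_apply, transpose_apply]
    simp only [mul_apply, transpose_apply, hA, Fintype.sum_option, Option.elim,
      Fintype.sum_prod_type]
    rw [key i.1 j.1 i.2 j.2, h13]
    split_ifs <;> norm_num
  -- Aᵀ * A is an invertible diagonal matrix
  have hATA : Aᵀ * A = Matrix.diagonal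
      (fun c => Option.elim c ((3 * l : ℝ) / 13) (fun _ => (18 : ℝ) / 13)) := by
    ext c c'
    simp only [mul_apply, transpose_apply]
    simp only [mul_apply, transpose_apply, hA, Fintype.sum_prod_type]
    match c, c' with
    | none, none =>
      simp only [Option.elim, Matrix.diagonal_apply_eq]
      rw [Finset.sum_congr rfl fun k _ => Fin.sum_univ_three _]
      simp only [h13]
      rw [Finset.sum_const, Finset.card_univ, Fintype.card_fin, nsmul_eq_mul]
      push_cast
      ring
    | none, some q =>
      rw [Matrix.diagonal_apply_ne _ (by simp : (none : Option (Fin l × Fin 2)) ≠ some q)]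
      refine Finset.sum_eq_zero fun k _ => ?_
      simp only [Option.elim]
      by_cases hk : k = q.1
      · subst hk
        rw [← Finset.mul_sum]
        rw [Finset.sum_congr rfl fun s _ => by rw [if_pos rfl]]
        rw [← Finset.mul_sum, wv_sum]
        ring
      · simp [hk]
    | some q, none =>
      rw [Matrix.diagonal_apply_ne _ (by simp : (some q : Option (Fin l × Fin 2)) ≠ none)]
      refine Finset.sum_eq_zero fun k _ => ?_
      simp only [Option.elim]
      by_cases hk : k = q.1
      · subst hk
        rw [← Finset.sum_mul]
        rw [Finset.sum_congr rfl fun s _ => by rw [if_pos rfl]]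
        rw [← Finset.mul_sum, wv_sum]
        ring
      · simp [hk]
    | some q, some r =>
      by_cases hqr : q = r
      · subst hqr
        simp only [Option.elim, Matrix.diagonal_apply_eq]
        have step : ∀ k : Fin l, (∑ s : Fin 3,
            (if k = q.1 then Real.sqrt (12/13) * wv s q.2 else 0) *
            (if k = q.1 then Real.sqrt (12/13) * wv s q.2 else 0)) =
            if k = q.1 then (12/13) * ∑ s, wv s q.2 * wv s q.2 else 0 := by
          intro k
          by_cases hk : k = q.1
          · rw [if_pos hk, Finset.mul_sum]
            refine Finset.sum_congr rfl fun s _ => ?_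
            rw [if_pos hk]
            linear_combination (wv s q.2 * wv s q.2) * h1213
          · simp [hk]
        rw [Finset.sum_congr rfl fun k _ => step k, Finset.sum_ite_eq',
          if_pos (Finset.mem_univ q.1), wv_gram, if_pos rfl]
        norm_num
      · rw [Matrix.diagonal_apply_ne _ (by simp [hqr])]
        refine Finset.sum_eq_zero fun k _ => ?_
        simp only [Option.elim]
        by_cases hq : k = q.1
        · by_cases hr : k = r.1
          · have ht : q.2 ≠ r.2 := by
              intro h2
              exact hqr (Prod.ext (hq ▸ hr ▸ rfl : q.1 = r.1) h2)
            have step : ∀ s : Fin 3,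
                (if k = q.1 then Real.sqrt (12/13) * wv s q.2 else 0) *
                (if k = r.1 then Real.sqrt (12/13) * wv s r.2 else 0) =
                (12/13) * (wv s q.2 * wv s r.2) := by
              intro s
              rw [if_pos hq, if_pos hr]
              linear_combination (wv s q.2 * wv s r.2) * h1213
            rw [Finset.sum_congr rfl fun s _ => step s, ← Finset.mul_sum, wv_gram,
              if_neg ht, mul_zero]
          · simp [hr]
        · simp [hq]
  constructor
  · rw [hGA, ← Matrix.conjTranspose_eq_transpose_of_trivial]
    exact Matrix.posSemidef_self_mul_conjTranspose A
  · have hrank : A.rank = 2 * l + 1 := by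
      have hdet : (Aᵀ * A).det ≠ 0 := by
        rw [hATA, Matrix.det_diagonal, Fintype.prod_option]
        have h1 : ((3 * l : ℝ) / 13) ≠ 0 := by
          have hl' : (l : ℝ) ≠ 0 := Nat.cast_ne_zero.mpr (by omega)
          positivity
        simp only [Option.elim]
        exact mul_ne_zero h1 (Finset.prod_ne_zero_iff.mpr fun p _ => by norm_num)
      have hrk := Matrix.rank_of_isUnit (Aᵀ * A)
        ((Matrix.isUnit_iff_isUnit_det _).mpr (isUnit_iff_ne_zero.mpr hdet))
      rw [Matrix.rank_transpose_mul_self] at hrk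
      rw [hrk]
      simp [Fintype.card_option, Fintype.card_prod]
      ring
    rw [hGA, Matrix.rank_self_mul_transpose, hrank]
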